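/- Let h_1,…,h_K ∈ ℂ^N, set H_l = h_l h_l^H, and let Ω(H) = {(tr(Q H_1), …, tr(Q H_K)) : Q Hermitian positive semidefinite, tr(Q) ≤ 1}. Fix an index k and η ∈ ℝ^K with η_k > 0 and η_l < 0 for all l ≠ k. Then every point y of the exposed face Φ_{Ω(H)}(η) = {y ∈ Ω(H) : ηᵀy = max_{z∈Ω(H)} ηᵀz} is achieved by a correlation matrix of rank at most one; that is, there exists w ∈ ℂ^N with ‖w‖ ≤ 1 such that y = (|h_1^H w|², …, |h_K^H w|²). -/

import Mathlib

open Matrix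
open scoped ComplexOrder

/-- The power gain `hᴴ Q h` (a real number for Hermitian `Q`);
for `H = h hᴴ` this equals `tr(Q H)`. -/
noncomputable def powerGain {N : ℕ} (Q : Matrix (Fin N) (Fin N) ℂ) (h : Fin N → ℂ) : ℝ :=
  (star h ⬝ᵥ Q.mulVec h).re

/-- `Ω(H) = {(tr(Q H_1),…,tr(Q H_K)) : Q PSD, tr Q ≤ 1}` for `H_l = h_l h_lᴴ`. -/
def PGRegion {N K : ℕ} (h : Fin K → (Fin N → ℂ)) : Set (Fin K → ℝ) :=
  {x | ∃ Q : Matrix (Fin N) (Fin N) ℂ, Q.PosSemidef ∧ Q.trace.re ≤ 1 ∧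
    x = fun l => powerGain Q (h l)}

private lemma dot_star_self {N : ℕ} (u : Fin N → ℂ) :
    star u ⬝ᵥ u = ((∑ i, Complex.normSq (u i) : ℝ) : ℂ) := by
  simp only [dotProduct, Pi.star_apply, Complex.ofReal_sum]
  congr 1; funext i
  rw [mul_comm]; exact Complex.mul_conj (u i)

private lemma cs_vec {N : ℕ} (a b : Fin N → ℂ) :
    Complex.normSq (star a ⬝ᵥ b) ≤ (∑ i, Complex.normSq (a i)) * (∑ i, Complex.normSq (b i)) := by
  let x : EuclideanSpace ℂ (Fin N) := (WithLp.equiv 2 _).symm a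
  let y : EuclideanSpace ℂ (Fin N) := (WithLp.equiv 2 _).symm b
  have hx : ‖x‖ ^ 2 = ∑ i, Complex.normSq (a i) := by
    rw [← inner_self_eq_norm_sq (𝕜 := ℂ), show (inner ℂ x x : ℂ) = star a ⬝ᵥ a from
      (EuclideanSpace.inner_toLp_toLp a a).trans (dotProduct_comm _ _),
      dot_star_self]; simp
  have hy : ‖y‖ ^ 2 = ∑ i, Complex.normSq (b i) := by
    rw [← inner_self_eq_norm_sq (𝕜 := ℂ), show (inner ℂ y y : ℂ) = star b ⬝ᵥ b from
      (EuclideanSpace.inner_toLp_toLp b b).trans (dotProduct_comm _ _),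
      dot_star_self]; simp
  have h1 : ‖(inner ℂ x y : ℂ)‖ ≤ ‖x‖ * ‖y‖ := norm_inner_le_norm x y
  have h2 : (inner ℂ x y : ℂ) = star a ⬝ᵥ b := (EuclideanSpace.inner_toLp_toLp a b).trans (dotProduct_comm _ _)
  calc Complex.normSq (star a ⬝ᵥ b) = ‖(inner ℂ x y : ℂ)‖ ^ 2 := by
        rw [h2, Complex.sq_norm]
    _ ≤ (‖x‖ * ‖y‖) ^ 2 := by
        apply pow_le_pow_left₀ (norm_nonneg _) h1
    _ = (∑ i, Complex.normSq (a i)) * (∑ i, Complex.normSq (b i)) := by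
        rw [mul_pow, hx, hy]

private lemma outer_mulVec {N : ℕ} (w v : Fin N → ℂ) :
    (vecMulVec w (star w)) *ᵥ v = (star w ⬝ᵥ v) • w := by
  ext i
  simp only [mulVec, vecMulVec_apply, dotProduct, Pi.star_apply, Pi.smul_apply, smul_eq_mul,
    Finset.sum_mul]
  congr 1; funext j; ring

private lemma star_dot_comm {N : ℕ} (a b : Fin N → ℂ) :
    star a ⬝ᵥ b = star (star b ⬝ᵥ a) := by
  simp only [dotProduct, Pi.star_apply, star_sum, star_mul', star_star]
  congr 1; funext j; ring

private lemma gain_eq {N : ℕ} (B : Matrix (Fin N) (Fin N) ℂ) (v : Fin N → ℂ) :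
    star v ⬝ᵥ (Bᴴ * B) *ᵥ v = ((∑ i, Complex.normSq ((B *ᵥ v) i) : ℝ) : ℂ) := by
  rw [← mulVec_mulVec, dotProduct_mulVec, ← star_mulVec, dot_star_self]

private lemma trace_conj_mul {N : ℕ} (B : Matrix (Fin N) (Fin N) ℂ) :
    (Bᴴ * B).trace = ((∑ i, ∑ j, Complex.normSq (Bᴴ i j) : ℝ) : ℂ) := by
  simp only [trace, diag, mul_apply, conjTranspose_apply, Complex.ofReal_sum]
  congr 1; funext i; congr 1; funext j
  rw [Complex.star_def, Complex.normSq_conj, mul_comm, Complex.mul_conj]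

private lemma mulVec_normSq_le {N : ℕ} (C : Matrix (Fin N) (Fin N) ℂ) (v : Fin N → ℂ) :
    ∑ i, Complex.normSq ((C *ᵥ v) i)
      ≤ (∑ i, ∑ j, Complex.normSq (C i j)) * (∑ j, Complex.normSq (v j)) := by
  rw [Finset.sum_mul]
  apply Finset.sum_le_sum; intro i _
  have h := cs_vec (fun j => star (C i j)) v
  simpa [mulVec, dotProduct, Complex.star_def, Complex.normSq_conj] using h

private lemma mem_PGRegion_of_w {N K : ℕ} (h : Fin K → (Fin N → ℂ)) (w : Fin N → ℂ)
    (hw : ∑ i, Complex.normSq (w i) ≤ 1) :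
    (fun l => Complex.normSq (star (h l) ⬝ᵥ w)) ∈ PGRegion h := by
  refine ⟨vecMulVec w (star w), posSemidef_iff_dotProduct_mulVec.mpr ⟨?_, ?_⟩, ?_, ?_⟩
  · ext i j
    simp only [conjTranspose_apply, vecMulVec_apply, Pi.star_apply, star_mul', star_star]
    exact mul_comm _ _
  · intro x
    rw [outer_mulVec, dotProduct_smul, star_dot_comm x w, smul_eq_mul,
      Complex.star_def, Complex.mul_conj]
    rw [Complex.zero_le_real]
    exact Complex.normSq_nonneg _
  · have ht : (vecMulVec w (star w)).trace = ((∑ i, Complex.normSq (w i) : ℝ) : ℂ) := by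
      simp only [trace, diag, vecMulVec_apply, Pi.star_apply, Complex.ofReal_sum]
      congr 1; funext i
      rw [Complex.star_def, Complex.mul_conj]
    rw [ht, Complex.ofReal_re]; exact hw
  · funext l
    unfold powerGain
    rw [outer_mulVec, dotProduct_smul, star_dot_comm w (h l), smul_eq_mul,
      Complex.star_def, mul_comm, Complex.mul_conj, Complex.ofReal_re]

/-- For `η` with `η_k > 0` and `η_l < 0` (`l ≠ k`), every point of the exposed
face of `Ω(H)` in direction `η` is achieved by a rank-at-most-one correlation
matrix `Q = w wᴴ` with `‖w‖ ≤ 1`. -/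
theorem exposed_face_rank_one
    (N K : ℕ)
    (h : Fin K → (Fin N → ℂ)) (k : Fin K)
    (η : Fin K → ℝ) (hηk : 0 < η k) (hηl : ∀ l, l ≠ k → η l < 0)
    (y : Fin K → ℝ)
    (hy : y ∈ PGRegion h)
    (hface : ∀ z ∈ PGRegion h, ∑ l, η l * z l ≤ ∑ l, η l * y l) :
    ∃ w : Fin N → ℂ, (∑ i, Complex.normSq (w i)) ≤ 1 ∧
      y = fun l => Complex.normSq (star (h l) ⬝ᵥ w) := by
  obtain ⟨Q, hQ, htr, hyeq⟩ := hy
  open MatrixOrder in obtain ⟨B, hB⟩ := CStarAlgebra.nonneg_iff_eq_star_mul_self.mp hQ.nonneg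
  rw [star_eq_conjTranspose] at hB; subst hB
  set u : Fin K → (Fin N → ℂ) := fun l => B *ᵥ h l with hu
  have hyl : ∀ l, y l = ∑ i, Complex.normSq (u l i) := by
    intro l
    have : y l = powerGain (Bᴴ * B) (h l) := by rw [hyeq]
    rw [this]; unfold powerGain; rw [gain_eq, Complex.ofReal_re]
  have hynn : ∀ l, 0 ≤ y l := by
    intro l; rw [hyl l]; exact Finset.sum_nonneg fun i _ => Complex.normSq_nonneg _
  -- choose the beamforming vector w
  have key : ∃ w : Fin N → ℂ, (∑ i, Complex.normSq (w i)) ≤ 1 ∧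
      Complex.normSq (star (h k) ⬝ᵥ w) = y k ∧
      ∀ l, Complex.normSq (star (h l) ⬝ᵥ w) ≤ y l := by
    by_cases hc : y k = 0
    · refine ⟨0, by simp, by simp [hc], fun l => by simpa using hynn l⟩
    · have hcpos : 0 < y k := lt_of_le_of_ne (hynn k) (Ne.symm hc)
      set c : ℝ := y k with hcdef
      have hsq : Complex.normSq (((Real.sqrt c : ℂ))⁻¹) = c⁻¹ := by
        rw [map_inv₀, Complex.normSq_ofReal, Real.mul_self_sqrt hcpos.le]
      have hdot : ∀ l, star (h l) ⬝ᵥ (((Real.sqrt c : ℂ))⁻¹ • (Bᴴ *ᵥ u k))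
          = ((Real.sqrt c : ℂ))⁻¹ * (star (u l) ⬝ᵥ u k) := by
        intro l
        rw [dotProduct_smul, smul_eq_mul, dotProduct_mulVec, ← star_mulVec]
      have hT : (∑ i, ∑ j, Complex.normSq (Bᴴ i j)) ≤ 1 := by
        have := htr
        rwa [trace_conj_mul, Complex.ofReal_re] at this
      refine ⟨((Real.sqrt c : ℂ))⁻¹ • (Bᴴ *ᵥ u k), ?_, ?_, ?_⟩
      · calc ∑ i, Complex.normSq ((((Real.sqrt c : ℂ))⁻¹ • (Bᴴ *ᵥ u k)) i)
            = c⁻¹ * ∑ i, Complex.normSq ((Bᴴ *ᵥ u k) i) := by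
              rw [Finset.mul_sum]; congr 1; funext i
              rw [Pi.smul_apply, smul_eq_mul, Complex.normSq_mul, hsq]
          _ ≤ c⁻¹ * ((∑ i, ∑ j, Complex.normSq (Bᴴ i j)) * (∑ j, Complex.normSq (u k j))) :=
              mul_le_mul_of_nonneg_left (mulVec_normSq_le Bᴴ (u k)) (inv_nonneg.mpr hcpos.le)
          _ = (∑ i, ∑ j, Complex.normSq (Bᴴ i j)) := by
              rw [← hyl k, ← hcdef]; field_simp
          _ ≤ 1 := hT
      · rw [hdot k, Complex.normSq_mul, hsq, dot_star_self, ← hyl k, ← hcdef,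
          Complex.normSq_ofReal]
        field_simp
      · intro l
        rw [hdot l, Complex.normSq_mul, hsq]
        calc c⁻¹ * Complex.normSq (star (u l) ⬝ᵥ u k)
            ≤ c⁻¹ * ((∑ i, Complex.normSq (u l i)) * (∑ i, Complex.normSq (u k i))) :=
              mul_le_mul_of_nonneg_left (cs_vec (u l) (u k)) (inv_nonneg.mpr hcpos.le)
          _ = y l := by rw [← hyl l, ← hyl k, ← hcdef]; field_simp
  obtain ⟨w, hw1, hwk, hwle⟩ := key
  refine ⟨w, hw1, ?_⟩
  set z : Fin K → ℝ := fun l => Complex.normSq (star (h l) ⬝ᵥ w) with hz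
  have hzmem : z ∈ PGRegion h := mem_PGRegion_of_w h w hw1
  have hle : ∀ l ∈ Finset.univ, η l * y l ≤ η l * z l := by
    intro l _
    rcases eq_or_ne l k with rfl | hne
    · rw [show z l = y l from hwk]
    · exact mul_le_mul_of_nonpos_left (hwle l) (le_of_lt (hηl l hne))
  have hsum : ∑ l, η l * y l = ∑ l, η l * z l :=
    le_antisymm (Finset.sum_le_sum hle) (hface z hzmem)
  funext l
  have hterm : η l * y l = η l * z l := by
    by_contra hne
    have hlt : ∑ l, η l * y l < ∑ l, η l * z l :=
      Finset.sum_lt_sum hle ⟨l, Finset.mem_univ l, lt_of_le_of_ne (hle l (Finset.mem_univ l)) hne⟩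
    exact absurd hsum (ne_of_lt hlt)
  have hη0 : η l ≠ 0 := by
    rcases eq_or_ne l k with rfl | hne
    · exact ne_of_gt hηk
    · exact ne_of_lt (hηl l hne)
  exact mul_left_cancel₀ hη0 hterm
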